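/- arXiv:1701.05117 — 2 statements merged into one kernel-verified Lean document; each statement's English description precedes it below -/
import Mathlib

section
/- Let π be a conformal anti-invariant ξ⊥-submersion from a Sasakian manifold (M, φ, ξ, η, g_M) onto (N, g_N) with (ker π_*)^⊥ = φ(ker π_*) ⊕ ⟨ξ⟩. Then the vertical distribution ker π_* defines a totally geodesic foliation on M if and only if T_V φW = 0 for all vertical vector fields V, W. -/
/-- For a conformal anti-invariant `ξ⟂`-submersion from a Sasakian manifold with
`(ker π_*)⟂ = φ(ker π_*) ⊕ ⟨ξ⟩`, the vertical distribution `ker π_*` defines a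
totally geodesic foliation iff `T_V φW = 0` for all vertical vector fields `V, W`. -/
theorem stmt13
    {F : Type*} [CommRing F] [Algebra ℝ F]
    {VF : Type*} [AddCommGroup VF] [Module F VF] [Module ℝ VF] [IsScalarTower ℝ F VF]
    {TN : Type*} [AddCommGroup TN] [Module F TN] [Module ℝ TN] [IsScalarTower ℝ F TN]
    (g : VF → VF → F) (gN : TN → TN → F)
    (phi : VF → VF) (xi : VF) (eta : VF → F)
    (nabla : VF → VF → VF) (D : VF → F → F)
    (Hh Vv : VF → VF) (pis : VF → TN) (lam : F)
    -- g is bilinear and symmetric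
    (hgaddl : ∀ X Y Z, g (X + Y) Z = g X Z + g Y Z)
    (hgaddr : ∀ X Y Z, g X (Y + Z) = g X Y + g X Z)
    (hgsmull : ∀ (a : F) X Y, g (a • X) Y = a * g X Y)
    (hgsmulr : ∀ (a : F) X Y, g X (a • Y) = a * g X Y)
    (hgsymm : ∀ X Y, g X Y = g Y X)
    -- Hh, Vv : complementary orthogonal linear projections
    (hHadd : ∀ Y Z, Hh (Y + Z) = Hh Y + Hh Z) (hHsmul : ∀ (a : F) Z, Hh (a • Z) = a • Hh Z)
    (hVadd : ∀ Y Z, Vv (Y + Z) = Vv Y + Vv Z) (hVsmul : ∀ (a : F) Z, Vv (a • Z) = a • Vv Z)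
    (hproj : ∀ Z, Hh Z + Vv Z = Z)
    (hHH : ∀ Z, Hh (Hh Z) = Hh Z) (hVV : ∀ Z, Vv (Vv Z) = Vv Z)
    (hHV : ∀ Z, Hh (Vv Z) = 0) (hVH : ∀ Z, Vv (Hh Z) = 0)
    (horth : ∀ Y Z, g (Hh Y) (Vv Z) = 0)
    -- almost contact metric structure
    (hphixi : phi xi = 0)
    (hetaphi : ∀ X, eta (phi X) = 0)
    (hetaxi : eta xi = 1)
    (hphisq : ∀ X, phi (phi X) = -X + eta X • xi)
    (hcomp : ∀ X Y, g (phi X) (phi Y) = g X Y - eta X * eta Y)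
    (hetag : ∀ X, eta X = g X xi)
    -- Sasakian conditions
    (hSas : ∀ X Y, nabla X (phi Y) - phi (nabla X Y) = eta Y • X - g X Y • xi)
    (hnxi : ∀ X, nabla X xi = phi X)
    -- Levi-Civita connection: compatible with the metric
    (hmetric : ∀ X Y Z, D X (g Y Z) = g (nabla X Y) Z + g Y (nabla X Z))
    (hD0 : ∀ X, D X (0 : F) = 0)
    -- π is a horizontally conformal submersion with dilation λ, ker π_* vertical
    (hlam : IsUnit lam)
    (hconf : ∀ X Y, Hh X = X → Hh Y = Y → gN (pis X) (pis Y) = lam * lam * g X Y)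
    (hpisadd : ∀ Y Z, pis (Y + Z) = pis Y + pis Z)
    (hker : ∀ Z, pis (Vv Z) = 0)
    -- ξ is horizontal and the fibres are anti-invariant: φ(ker π_*) ⊆ (ker π_*)⟂
    (hxiH : Hh xi = xi)
    (hanti : ∀ V, Vv V = V → Hh (phi V) = phi V)
    (T : VF → VF → VF)
    (hT : ∀ E G, T E G = Hh (nabla (Vv E) (Vv G)) + Vv (nabla (Vv E) (Hh G)))
    -- (ker π_*)⟂ = φ(ker π_*) ⊕ ⟨ξ⟩
    (hdec : ∀ Z, Hh Z = Z → ∃ V, ∃ r : F, Vv V = V ∧ Z = phi V + r • xi) :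
    (∀ V W, Vv V = V → Vv W = W → Hh (nabla V W) = 0) ↔
      (∀ V W, Vv V = V → Vv W = W → T V (phi W) = 0) := by

  -- basic facts
  have hg0r : ∀ X, g X 0 = 0 := by
    intro X
    have := hgsmulr 0 X xi
    simpa using this
  have hnabla0 : ∀ X, nabla X 0 = 0 := by
    intro X
    have h := hSas X xi
    rw [hphixi, hnxi, hphisq, hetaxi, ← hetag] at h
    have h2 := sub_eq_iff_eq_add.mp h
    rw [h2]
    simp
  have hVv0 : Vv (0 : VF) = 0 := by
    have := hVsmul 0 xi; simpa using this
  have hHh0 : Hh (0 : VF) = 0 := by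
    have := hHsmul 0 xi; simpa using this
  have hVxi : Vv xi = 0 := by rw [← hxiH, hVH]
  -- g of a vertical vector with xi is 0
  have hgvxi : ∀ W, Vv W = W → g W xi = 0 := by
    intro W hW
    rw [← hW, ← hxiH, hgsymm]
    exact horth xi W
  -- g of two vertical vectors with phi applied to one is 0
  have hgvphi : ∀ W V, Vv W = W → Vv V = V → g W (phi V) = 0 := by
    intro W V hW hV
    rw [← hW, ← hanti V hV, hgsymm]
    exact horth (phi V) W
  -- key: T V (phi W) = Vv (phi (nabla V W)) for vertical V W
  have hTphi : ∀ V W, Vv V = V → Vv W = W →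
      T V (phi W) = Vv (phi (nabla V W)) := by
    intro V W hV hW
    have hVphiW : Vv (phi W) = 0 := by rw [← hanti W hW, hVH]
    have hSasVW := sub_eq_iff_eq_add.mp (hSas V W)
    have hetaW : eta W = 0 := by rw [hetag]; exact hgvxi W hW
    rw [hT, hV, hVphiW, hnabla0, hHh0, hanti W hW, zero_add, hSasVW,
      hetaW, zero_smul, zero_sub, hVadd]
    have h0 : Vv (-(g V W • xi)) = 0 := by
      rw [← neg_one_smul F (g V W • xi), hVsmul, hVsmul, hVxi, smul_zero, smul_zero]
    rw [h0, zero_add]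
  constructor
  · intro hyp V W hV hW
    rw [hTphi V W hV hW]
    have hH : Hh (nabla V W) = 0 := hyp V W hV hW
    have hvert : Vv (nabla V W) = nabla V W := by
      conv_rhs => rw [← hproj (nabla V W), hH, zero_add]
    rw [← hanti _ hvert, hVH]
  · intro hyp V W hV hW
    have hA : Vv (phi (nabla V W)) = 0 := by
      rw [← hTphi V W hV hW]; exact hyp V W hV hW
    set A := nabla V W with hAdef
    -- eta A = 0
    have hetaA : eta A = 0 := by
      have hm := hmetric V W xi
      rw [hgvxi W hW, hD0, hnxi, hgvphi W V hW hV] at hm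
      rw [add_zero] at hm
      rw [hetag]; exact hm.symm
    -- phi A is horizontal
    have hphiAH : Hh (phi A) = phi A := by
      have := hproj (phi A)
      rw [hA, add_zero] at this
      exact this
    obtain ⟨U, r, hU, hEq⟩ := hdec (phi A) hphiAH
    -- r = 0
    have hr : r = 0 := by
      have h1 : eta (phi A) = 0 := hetaphi A
      rw [hEq, hetag, hgaddl, hgsmull, ← hetag, ← hetag, hetaphi, hetaxi,
        mul_one, zero_add] at h1
      exact h1
    rw [hr, zero_smul, add_zero] at hEq
    -- apply phi to both sides
    have h2 : phi (phi A) = phi (phi U) := by rw [hEq]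
    rw [hphisq, hphisq, hetaA, zero_smul, add_zero] at h2
    have hetaU : eta U = 0 := by rw [hetag]; exact hgvxi U hU
    rw [hetaU, zero_smul, add_zero] at h2
    have hAU : A = U := neg_injective h2
    rw [hAU, ← hU]
    exact hHV U
end

section
/- Let π be a conformal anti-invariant ξ⊥-submersion from a (2(m+n)+1)-dimensional Sasakian manifold M onto an (m+2n+1)-dimensional Riemannian manifold N such that π is horizontally homothetic (grad λ has no horizontal component). Then π is a harmonic map if and only if each fibre of π is a minimal submanifold of M. -/
/-- For a conformal anti-invariant `ξ⟂`-submersion `π` from a `2(m+n)+1`-dimensional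
Sasakian manifold onto an `(m+2n+1)`-dimensional Riemannian manifold which is
horizontally homothetic, `π` is harmonic iff the fibres are minimal. -/
theorem stmt16
    {F : Type*} [CommRing F] [Algebra ℝ F]
    {VF : Type*} [AddCommGroup VF] [Module F VF] [Module ℝ VF] [IsScalarTower ℝ F VF]
    {TN : Type*} [AddCommGroup TN] [Module F TN] [Module ℝ TN] [IsScalarTower ℝ F TN]
    (g : VF → VF → F) (gN : TN → TN → F)
    (phi : VF → VF) (xi : VF) (eta : VF → F)
    (nabla : VF → VF → VF) (D : VF → F → F)
    (Hh Vv : VF → VF) (pis : VF → TN) (lam : F)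
    -- g is bilinear and symmetric
    (hgaddl : ∀ X Y Z, g (X + Y) Z = g X Z + g Y Z)
    (hgaddr : ∀ X Y Z, g X (Y + Z) = g X Y + g X Z)
    (hgsmull : ∀ (a : F) X Y, g (a • X) Y = a * g X Y)
    (hgsmulr : ∀ (a : F) X Y, g X (a • Y) = a * g X Y)
    (hgsymm : ∀ X Y, g X Y = g Y X)
    -- Hh, Vv : complementary orthogonal linear projections
    (hHadd : ∀ Y Z, Hh (Y + Z) = Hh Y + Hh Z) (hHsmul : ∀ (a : F) Z, Hh (a • Z) = a • Hh Z)
    (hVadd : ∀ Y Z, Vv (Y + Z) = Vv Y + Vv Z) (hVsmul : ∀ (a : F) Z, Vv (a • Z) = a • Vv Z)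
    (hproj : ∀ Z, Hh Z + Vv Z = Z)
    (hHH : ∀ Z, Hh (Hh Z) = Hh Z) (hVV : ∀ Z, Vv (Vv Z) = Vv Z)
    (hHV : ∀ Z, Hh (Vv Z) = 0) (hVH : ∀ Z, Vv (Hh Z) = 0)
    (horth : ∀ Y Z, g (Hh Y) (Vv Z) = 0)
    -- almost contact metric structure
    (hphixi : phi xi = 0)
    (hetaphi : ∀ X, eta (phi X) = 0)
    (hetaxi : eta xi = 1)
    (hphisq : ∀ X, phi (phi X) = -X + eta X • xi)
    (hcomp : ∀ X Y, g (phi X) (phi Y) = g X Y - eta X * eta Y)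
    (hetag : ∀ X, eta X = g X xi)
    -- Sasakian conditions
    (hSas : ∀ X Y, nabla X (phi Y) - phi (nabla X Y) = eta Y • X - g X Y • xi)
    (hnxi : ∀ X, nabla X xi = phi X)
    -- Levi-Civita connection: compatible with the metric
    (hmetric : ∀ X Y Z, D X (g Y Z) = g (nabla X Y) Z + g Y (nabla X Z))
    (hD0 : ∀ X, D X (0 : F) = 0)
    -- π is a horizontally conformal submersion with dilation λ, ker π_* vertical
    (hlam : IsUnit lam)
    (hconf : ∀ X Y, Hh X = X → Hh Y = Y → gN (pis X) (pis Y) = lam * lam * g X Y)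
    (hpisadd : ∀ Y Z, pis (Y + Z) = pis Y + pis Z)
    (hker : ∀ Z, pis (Vv Z) = 0)
    -- ξ is horizontal and the fibres are anti-invariant: φ(ker π_*) ⊆ (ker π_*)⟂
    (hxiH : Hh xi = xi)
    (hanti : ∀ V, Vv V = V → Hh (phi V) = phi V)
    (m n : ℕ) (hm : 0 < m)
    (lnlam : F) (gradlam gradlnlam : VF) (mu : VF) (tau : TN)
    (hgrad : ∀ Z, D Z lam = g Z gradlam)
    (hgradln : ∀ Z, D Z lnlam = g Z gradlnlam)
    (hgradrel : lam • gradlnlam = gradlam)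
    -- the mean curvature vector of the fibres is horizontal, π_* injective on horizontals
    (hmuH : Hh mu = mu)
    (hinj : ∀ Z, Hh Z = Z → pis Z = 0 → Z = 0)
    -- the tension field of π (Theorem: τ(π) = -m π_*μ + (1-m-2n)π_*(grad ln λ))
    (htau : tau = -((m : ℝ) • pis mu) + ((1 : ℝ) - (m : ℝ) - 2 * (n : ℝ)) • pis gradlnlam)
    -- π is horizontally homothetic
    (hhom : Hh gradlam = 0) :
    tau = 0 ↔ mu = 0 := by
  -- Vv 0 = 0 and pis 0 = 0
  have hV0 : Vv (0 : VF) = 0 := by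
    calc Vv (0 : VF) = Vv ((0 : F) • (0 : VF)) := by rw [zero_smul]
      _ = (0 : F) • Vv 0 := hVsmul _ _
      _ = 0 := zero_smul _ _
  have hpis0 : pis (0 : VF) = 0 := by
    have := hker 0
    rwa [hV0] at this
  -- Hh gradlnlam = 0
  obtain ⟨u, hu⟩ := hlam
  have hH : Hh gradlnlam = 0 := by
    have h1 : lam • Hh gradlnlam = 0 := by
      have := congrArg Hh hgradrel
      rw [hHsmul] at this
      rw [this, hhom]
    have := congrArg (fun v => ((↑u⁻¹ : F) • v)) h1
    simp only [smul_smul, smul_zero] at this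
    rw [← hu, Units.inv_mul, one_smul] at this
    exact this
  -- pis gradlnlam = 0
  have hpg : pis gradlnlam = 0 := by
    have h2 : gradlnlam = Vv gradlnlam := by
      have := hproj gradlnlam
      rw [hH, zero_add] at this
      exact this.symm
    rw [h2, hker]
  rw [htau, hpg, smul_zero, add_zero]
  constructor
  · intro h
    have hmn : ((m : ℝ)) ≠ 0 := Nat.cast_ne_zero.mpr hm.ne'
    have hpm : pis mu = 0 := by
      have h1 : (m : ℝ) • pis mu = 0 := by
        have := congrArg Neg.neg h
        rwa [neg_neg, neg_zero] at this
      have := congrArg (fun v => ((m : ℝ)⁻¹ • v)) h1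
      simpa [smul_smul, inv_mul_cancel₀ hmn] using this
    have hmv : mu = 0 := hinj mu hmuH hpm
    exact hmv
  · intro h
    rw [h, hpis0, smul_zero, neg_zero]
end
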